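/- Let k ≥ 1 and let α_l ≥ 0, β_l ≥ 0 (l = 1, …, k) satisfy Σ_{l=1}^{k} α_l = 1 and β_l = 0 whenever α_l = 0. Suppose F : E → E satisfies the forward-Euler condition with step bound h_FE > 0. Given previous steps u^{n−k+1}, …, u^n ∈ E and Δt ≥ 0 with β_l Δt ≤ α_l h_FE for all l (i.e. Δt ≤ C h_FE with C = min_{β_l≠0} α_l/β_l), define the explicit multi-step update u^{n+1} = Σ_{l=1}^{k} (α_l • u^{n−k+l} + (Δt β_l) • F(u^{n−k+l})). Then f(u^{n+1}) ≤ max_{l=1,…,k} f(u^{n−k+l}). -/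

import Mathlib

/-- **Strong stability preservation of explicit linear multi-step methods.**
If the `k`-step method has coefficients `α l, β l ≥ 0` with `∑ α l = 1` and
`β l = 0` whenever `α l = 0`, `F` satisfies the forward-Euler condition with
step bound `hFE > 0`, and `β l * Δt ≤ α l * hFE` for all `l`, then the update
`uⁿ⁺¹ = ∑ l, (α l • u l + Δt β l • F (u l))` satisfies
`f uⁿ⁺¹ ≤ max_l f (u l)`.  Here `u l` denotes the previous step `u^{n-k+l}`
for `l = 1, …, k`. -/
theorem ssp_multiStep
    {E : Type*} [NormedAddCommGroup E] [NormedSpace ℝ E] [FiniteDimensional ℝ E]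
    (f : E → ℝ) (hf_cont : Continuous f) (hf_conv : ConvexOn ℝ Set.univ f)
    (F : E → E)
    (hFE : ℝ) (hFE_pos : 0 < hFE)
    (hF : ∀ u : E, ∀ τ : ℝ, 0 ≤ τ → τ ≤ hFE → f (u + τ • F u) ≤ f u)
    (k : ℕ) (hk : 1 ≤ k)
    (α β : ℕ → ℝ)
    (hα_nonneg : ∀ l, 1 ≤ l → l ≤ k → 0 ≤ α l)
    (hβ_nonneg : ∀ l, 1 ≤ l → l ≤ k → 0 ≤ β l)
    (hα_sum : ∑ l ∈ Finset.Icc 1 k, α l = 1)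
    (hβ_zero : ∀ l, 1 ≤ l → l ≤ k → α l = 0 → β l = 0)
    (u : ℕ → E) (Δt : ℝ) (hΔt : 0 ≤ Δt)
    (hstep : ∀ l, 1 ≤ l → l ≤ k → β l * Δt ≤ α l * hFE)
    (unext : E)
    (hunext : unext = ∑ l ∈ Finset.Icc 1 k,
      (α l • u l + (Δt * β l) • F (u l))) :
    f unext ≤ (Finset.Icc 1 k).sup' (Finset.nonempty_Icc.mpr hk)
      (fun l => f (u l)) := by
  set s := Finset.Icc 1 k with hs
  have hne : s.Nonempty := Finset.nonempty_Icc.mpr hk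
  set v : ℕ → E := fun l => if α l = 0 then u l else u l + (Δt * β l / α l) • F (u l) with hv
  have hmem : ∀ l ∈ s, 1 ≤ l ∧ l ≤ k := by
    intro l hl; exact Finset.mem_Icc.mp hl
  have hrw : unext = ∑ l ∈ s, α l • v l := by
    rw [hunext]
    refine Finset.sum_congr rfl ?_
    intro l hl
    obtain ⟨h1, h2⟩ := hmem l hl
    by_cases h : α l = 0
    · simp [hv, h, hβ_zero l h1 h2 h]
    · simp only [hv, if_neg h, smul_add, smul_smul]
      congr 2
      field_simp
  have hconv := hf_conv.map_sum_le (t := s) (w := α) (p := v)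
    (fun l hl => hα_nonneg l (hmem l hl).1 (hmem l hl).2) hα_sum
    (fun l _ => Set.mem_univ _)
  rw [hrw]
  refine hconv.trans ?_
  have hM : ∀ l ∈ s, α l * f (v l) ≤ α l * s.sup' hne (fun l => f (u l)) := by
    intro l hl
    obtain ⟨h1, h2⟩ := hmem l hl
    have hαl := hα_nonneg l h1 h2
    have hfv : f (v l) ≤ f (u l) := by
      by_cases h : α l = 0
      · simp [hv, h]
      · have hαpos : 0 < α l := lt_of_le_of_ne hαl (Ne.symm h)
        have hτ0 : 0 ≤ Δt * β l / α l :=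
          div_nonneg (mul_nonneg hΔt (hβ_nonneg l h1 h2)) hαl
        have hτ1 : Δt * β l / α l ≤ hFE := by
          rw [div_le_iff₀ hαpos]
          calc Δt * β l = β l * Δt := by ring
            _ ≤ α l * hFE := hstep l h1 h2
            _ = hFE * α l := by ring
        simpa [hv, if_neg h] using hF (u l) _ hτ0 hτ1
    by_cases h : α l = 0
    · simp [h]
    · have hαpos : 0 < α l := lt_of_le_of_ne hαl (Ne.symm h)
      exact mul_le_mul_of_nonneg_left
        (hfv.trans (Finset.le_sup' (fun l => f (u l)) hl)) hαl
  calc ∑ l ∈ s, α l * f (v l) ≤ ∑ l ∈ s, α l * s.sup' hne (fun l => f (u l)) :=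
        Finset.sum_le_sum hM
    _ = (∑ l ∈ s, α l) * s.sup' hne (fun l => f (u l)) := by rw [Finset.sum_mul]
    _ = s.sup' hne (fun l => f (u l)) := by rw [hα_sum, one_mul]
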